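/- For every c ∈ ℤ² ⊆ G and every letter x ∈ X, ρ(c, x) = 1_G; hence ρ*(c, w) = 1_G for every c ∈ ℤ² and every nonempty word w over X. Moreover, for every nonempty finite word w over X, the unordered pair {(1,0)·w, (0,1)·w} equals the unordered pair {w, (1,1)·w} (equality of two-element sets of words). -/

import Mathlib

/-- The group `G = H × F(a,b) × ℤ × ℤ` (with `ℤ` written multiplicatively so that the product
carries a group structure). The free group on two generators is `FreeGroup Bool`, with
generators `a = .of false` and `b = .of true`. -/
abbrev GG (H : Type) : Type := H × FreeGroup Bool × Multiplicative ℤ × Multiplicative ℤ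

/-- The group `K = H × F(a,b) × ℤ`. -/
abbrev KK (H : Type) : Type := H × FreeGroup Bool × Multiplicative ℤ

/-- `π₁ : G → K`, `(h,f,n,m) ↦ (h,f,n)`. -/
def pi1 {H : Type} (g : GG H) : KK H := (g.1, g.2.1, g.2.2.1)

/-- `π₂ : G → K`, `(h,f,n,m) ↦ (h,f,m)`. -/
def pi2 {H : Type} (g : GG H) : KK H := (g.1, g.2.1, g.2.2.2)

/-- `ζ₁ : G → ℤ`, `(h,f,n,m) ↦ n`. -/
def zeta1 {H : Type} (g : GG H) : ℤ := Multiplicative.toAdd g.2.2.1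

/-- `ζ₂ : G → ℤ`, `(h,f,n,m) ↦ m`. -/
def zeta2 {H : Type} (g : GG H) : ℤ := Multiplicative.toAdd g.2.2.2

/-- The exponent sum of the generator `i` in an element of the free group on two generators. -/
def expSum (i : Bool) : FreeGroup Bool →* Multiplicative ℤ :=
  FreeGroup.lift (fun j => Multiplicative.ofAdd (if j = i then (1 : ℤ) else 0))

/-- `τ : G → G`, `(h,f,n,m) ↦ (1,1,|f|_a,|f|_b)`, the abelianization of `F` in `G`. -/
def tau {H : Type} [Group H] (g : GG H) : GG H :=
  (1, 1, expSum false g.2.1, expSum true g.2.1)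

/-- The alphabet `X = Y ⊔ Z`, `Y = {yⁱ_n : n ∈ ℤ}`, `Z = {zⁱ_k : k ∈ K}`, `i ∈ {1,2}`
(`i = 1` encoded as `false`, `i = 2` as `true`). -/
inductive Letter (H : Type) : Type
  | y : Bool → ℤ → Letter H
  | z : Bool → KK H → Letter H

/-- The letter action `α : G × X → X`:
`α(g, yⁱ_n) = yⁱ_{ζᵢ(g)+n}` and `α(g, zⁱ_k) = zⁱ_{πᵢ(g)·k}`. -/
def actL {H : Type} [Group H] (g : GG H) : Letter H → Letter H
  | Letter.y false n => Letter.y false (zeta1 g + n)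
  | Letter.y true n => Letter.y true (zeta2 g + n)
  | Letter.z false k => Letter.z false (pi1 g * k)
  | Letter.z true k => Letter.z true (pi2 g * k)

/-- The restriction `ρ : G × X → G`: `ρ(g, yⁱ_n) = τ(g)` and `ρ(g, zⁱ_k) = 1`. -/
def resL {H : Type} [Group H] (g : GG H) : Letter H → GG H
  | Letter.y _ _ => tau g
  | Letter.z _ _ => 1

/-- The action of `G` on finite words over `X`:
`g·ε = ε` and `g·(x w) = α(g,x) (ρ(g,x)·w)`. -/
def wact {H : Type} [Group H] : GG H → List (Letter H) → List (Letter H)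
  | _, [] => []
  | g, x :: w => actL g x :: wact (resL g x) w

/-- The restriction of `g ∈ G` along a word: `ρ*(g,ε) = g`, `ρ*(g, x w) = ρ*(ρ(g,x), w)`. -/
def wres {H : Type} [Group H] : GG H → List (Letter H) → GG H
  | g, [] => g
  | g, x :: w => wres (resL g x) w


lemma actL_one {H : Type} [Group H] (x : Letter H) : actL (1 : GG H) x = x := by
  cases x with
  | y i n => cases i <;> simp [actL, zeta1, zeta2]
  | z i k => cases i <;> simp [actL, pi1, pi2, Prod.ext_iff]

lemma wact_one {H : Type} [Group H] (w : List (Letter H)) : wact (1 : GG H) w = w := by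
  induction w with
  | nil => rfl
  | cons x w ih =>
    have h1 : resL (1 : GG H) x = 1 := by
      cases x with
      | y i n => simp [resL, tau, expSum, Prod.ext_iff]
      | z i k => rfl
    simp [wact, h1, ih, actL_one]

lemma resL_c {H : Type} [Group H] (n m : ℤ) (x : Letter H) :
    resL ((1, 1, Multiplicative.ofAdd n, Multiplicative.ofAdd m) : GG H) x = 1 := by
  cases x with
  | y i k => simp [resL, tau, expSum, Prod.ext_iff]
  | z i k => rfl

/-- For every `c ∈ ℤ² ⊆ G` and letter `x`, `ρ(c,x) = 1`, hence `ρ*(c,w) = 1` for every nonempty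
word `w`; moreover for every nonempty word `w` the unordered pair `{(1,0)·w, (0,1)·w}` equals
the unordered pair `{w, (1,1)·w}`. -/
theorem stmt9 (H : Type) [Group H] :
    (∀ (n m : ℤ) (x : Letter H),
      resL ((1, 1, Multiplicative.ofAdd n, Multiplicative.ofAdd m) : GG H) x = 1) ∧
    (∀ (n m : ℤ) (w : List (Letter H)), w ≠ [] →
      wres ((1, 1, Multiplicative.ofAdd n, Multiplicative.ofAdd m) : GG H) w = 1) ∧
    (∀ w : List (Letter H), w ≠ [] →
      ({wact ((1, 1, Multiplicative.ofAdd 1, Multiplicative.ofAdd 0) : GG H) w,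
        wact ((1, 1, Multiplicative.ofAdd 0, Multiplicative.ofAdd 1) : GG H) w} :
          Set (List (Letter H))) =
      {w, wact ((1, 1, Multiplicative.ofAdd 1, Multiplicative.ofAdd 1) : GG H) w}) := by

  have hres := fun n m (x : Letter H) => resL_c (H := H) n m x
  refine ⟨hres, ?_, ?_⟩
  · intro n m w hw
    cases w with
    | nil => exact absurd rfl hw
    | cons x w =>
      rw [wres, hres]
      induction w with
      | nil => rfl
      | cons y w ih =>
        have h1 : resL (1 : GG H) y = 1 := by
          cases y with
          | y i k => simp [resL, tau, expSum, Prod.ext_iff]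
          | z i k => rfl
        rw [wres, h1]
        exact ih (by simp)
  · intro w hw
    cases w with
    | nil => exact absurd rfl hw
    | cons x w =>
      have key : ∀ (n m : ℤ),
          wact ((1, 1, Multiplicative.ofAdd n, Multiplicative.ofAdd m) : GG H) (x :: w)
            = actL ((1, 1, Multiplicative.ofAdd n, Multiplicative.ofAdd m) : GG H) x :: w := by
        intro n m
        rw [wact, hres, wact_one]
      rw [key, key, key]
      have hone : wact (1 : GG H) (x :: w) = x :: w := wact_one _
      cases x with
      | y i k =>
        cases i
        · simp only [actL, zeta1, zeta2]
          norm_num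
          exact Set.pair_comm _ _
        · simp only [actL, zeta1, zeta2]
          norm_num
      | z i k =>
        cases i
        · simp only [actL, pi1, pi2]
          norm_num
          simp only [Prod.mk_one_one, one_mul]
          exact Set.pair_comm _ _
        · simp only [actL, pi1, pi2]
          norm_num
          simp only [Prod.mk_one_one, one_mul]
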